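/- For an element x of a nominal set and an atom a, the following are equivalent: (1) a ∉ supp(x); (2) the set {c ∈ 𝔸 : (a c)·x = x} is cofinite in 𝔸 (Pitts' equivalence). -/

import Mathlib

/-- The countably infinite set of atoms. -/
abbrev Atom : Type := ℕ

/-- The domain of a permutation: the atoms it moves. -/
def pdom (π : Equiv.Perm Atom) : Set Atom := {a | π a ≠ a}

/-- The group `Perm(𝔸)` of finite (finitely supported) permutations of atoms. -/
def FinPerm : Subgroup (Equiv.Perm Atom) where
  carrier := {π | (pdom π).Finite}
  one_mem' := by simp [pdom]
  mul_mem' := by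
    intro π σ hπ hσ
    refine (Set.Finite.union hπ hσ).subset ?_
    intro a ha
    by_contra h
    simp only [Set.mem_union, pdom, Set.mem_setOf_eq, not_or, not_not] at h
    exact ha (by simp [pdom, Equiv.Perm.mul_apply, h.1, h.2])
  inv_mem' := by
    intro π hπ
    refine hπ.subset ?_
    intro a ha h
    apply ha
    calc π⁻¹ a = π⁻¹ (π a) := by rw [h]
    _ = a := by simp

/-- `B` supports `x` w.r.t. the action `act`: every finite permutation fixing `B`
pointwise fixes `x`. -/
def NSupports {X : Type*} (act : FinPerm → X → X) (B : Set Atom) (x : X) : Prop :=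
  ∀ π : FinPerm, (∀ a ∈ B, (π : Equiv.Perm Atom) a = a) → act π x = x

/-- `nsupp act x` is the least support of `x`: the intersection of all finite supports. -/
def nsupp {X : Type*} (act : FinPerm → X → X) (x : X) : Set Atom :=
  ⋂₀ {B : Set Atom | B.Finite ∧ NSupports act B x}

/-- `act` makes `X` into a nominal set: a lawful `FinPerm`-action all of whose
elements are finitely supported. -/
def IsNominal {X : Type*} (act : FinPerm → X → X) : Prop :=
  (∀ x, act 1 x = x) ∧ (∀ π σ x, act (π * σ) x = act π (act σ x)) ∧
  (∀ x, ∃ B : Set Atom, B.Finite ∧ NSupports act B x)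

/-- The transposition `(a b)` as a finite permutation. -/
def swapF (a b : Atom) : FinPerm :=
  ⟨Equiv.swap a b, by
    apply Set.Finite.subset ((Set.finite_singleton b).insert a)
    intro x hx
    by_contra h
    simp only [Set.mem_insert_iff, Set.mem_singleton_iff, not_or] at h
    exact hx (Equiv.swap_apply_of_ne_of_ne h.1 h.2)⟩

lemma supports_image {X : Type*} (act : FinPerm → X → X)
    (h2 : ∀ π σ x, act (π * σ) x = act π (act σ x)) {B : Set Atom} {x : X}
    (hB : NSupports act B x) (π : FinPerm) :
    NSupports act ((π : Equiv.Perm Atom) '' B) (act π x) := by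
  intro σ hσ
  have hτ : act (π⁻¹ * σ * π) x = x := by
    apply hB
    intro b hb
    have h := hσ _ ⟨b, hb, rfl⟩
    show ((π⁻¹ * σ * π : FinPerm) : Equiv.Perm Atom) b = b
    simp only [Subgroup.coe_mul, Equiv.Perm.mul_apply, h]
    exact Equiv.symm_apply_apply _ _
  calc act σ (act π x) = act (σ * π) x := (h2 σ π x).symm
    _ = act (π * (π⁻¹ * σ * π)) x := by group
    _ = act π (act (π⁻¹ * σ * π) x) := h2 _ _ _
    _ = act π x := by rw [hτ]

/-- Pitts' equivalence: `a ∉ supp x` iff the set of atoms `c` with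
`(a c)·x = x` is cofinite. -/
theorem stmt2 {X : Type*} (act : FinPerm → X → X) (hnom : IsNominal act)
    (x : X) (a : Atom) :
    a ∉ nsupp act x ↔ ({c : Atom | act (swapF a c) x = x}ᶜ).Finite := by
  obtain ⟨h1, h2, h3⟩ := hnom
  constructor
  · intro ha
    rw [nsupp, Set.mem_sInter] at ha
    push_neg at ha
    obtain ⟨B, ⟨hBfin, hBsupp⟩, haB⟩ := ha
    refine hBfin.subset ?_
    intro c hc
    simp only [Set.mem_compl_iff, Set.mem_setOf_eq] at hc
    by_contra hcB
    apply hc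
    apply hBsupp
    intro b hb
    exact Equiv.swap_apply_of_ne_of_ne (ne_of_mem_of_not_mem hb haB)
      (ne_of_mem_of_not_mem hb hcB)
  · intro hfin
    obtain ⟨B₀, hB₀fin, hB₀⟩ := h3 x
    have hbig : ({c : Atom | act (swapF a c) x = x}ᶜ ∪ (B₀ ∪ {a})).Finite :=
      hfin.union (hB₀fin.union (Set.finite_singleton a))
    obtain ⟨c, hc⟩ := hbig.infinite_compl.nonempty
    simp only [Set.mem_compl_iff, Set.mem_union, Set.mem_singleton_iff, not_or,
      not_not, Set.mem_setOf_eq] at hc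
    obtain ⟨hcx, hcB₀, hca⟩ := hc
    intro ha
    rw [nsupp, Set.mem_sInter] at ha
    have hs := supports_image act h2 hB₀ (swapF a c)
    rw [hcx] at hs
    have hmem : a ∈ ((swapF a c : Equiv.Perm Atom)) '' B₀ :=
      ha _ ⟨hB₀fin.image _, hs⟩
    obtain ⟨b, hb, hba⟩ := hmem
    have hbc : b = c := by
      have := congrArg (Equiv.swap a c) hba
      rwa [show ((swapF a c : Equiv.Perm Atom) b) = Equiv.swap a c b from rfl,
        Equiv.swap_apply_self, Equiv.swap_apply_left] at this
    exact hcB₀ (hbc ▸ hb)
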